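/- Let C be an [n,k] non-degenerate linear rank metric code over F_{q^m} with generator matrix G and associated q-system X = F_q-span of the columns of G. For 1 ≤ r ≤ k, define n − d_r(X) = max{ dim_{F_q}(X ∩ Π) : Π an F_{q^m}-subspace of (F_{q^m})^k of codimension r }. Then d_r(X) = min{ dim_{F_q} S_q(D) : D an F_{q^m}-subspace of C of dimension r }, where S_q(D) is the F_q-span of the columns of a generator matrix of D. -/

import Mathlib

open Matrix


private lemma aux_surj {K : Type*} [Field K] {a b : ℕ} (M : Matrix (Fin a) (Fin b) K)
    (h : LinearIndependent K M) : Function.Surjective M.mulVecLin := by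
  rw [← LinearMap.range_eq_top]
  apply Submodule.eq_top_of_finrank_eq
  have := h.rank_matrix
  rw [Matrix.rank] at this
  simp [this]

private lemma aux_rn {K M N : Type*} [Field K] [AddCommGroup M] [Module K M]
    [AddCommGroup N] [Module K N] (g : M →ₗ[K] N) (p : Submodule K M) [FiniteDimensional K p] :
    Module.finrank K (p.map g) + Module.finrank K (p ⊓ LinearMap.ker g : Submodule K M)
      = Module.finrank K p := by
  have h := LinearMap.finrank_range_add_finrank_ker (g.comp p.subtype)
  rw [LinearMap.range_comp, Submodule.range_subtype, LinearMap.ker_comp] at h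
  have h2 : Submodule.comap p.subtype (LinearMap.ker g)
      = Submodule.comap p.subtype (p ⊓ LinearMap.ker g) := by
    rw [Submodule.comap_inf, Submodule.comap_subtype_self]
    exact (top_inf_eq _).symm
  rw [h2, LinearEquiv.finrank_eq (Submodule.comapSubtypeEquivOfLe
      (inf_le_left : p ⊓ LinearMap.ker g ≤ p))] at h
  exact h

private lemma aux_weight {Fq Fqm : Type*} [Field Fq] [Field Fqm] [Algebra Fq Fqm]
    {n k r : ℕ} (G : Fin k → Fin n → Fqm)
    (hnd : LinearIndependent Fq (fun j : Fin n => fun i : Fin k => G i j))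
    (f : (Fin k → Fqm) →ₗ[Fqm] (Fin r → Fqm)) :
    Module.finrank Fq (Submodule.span Fq
        (Set.range fun j : Fin n => fun i : Fin r => f (fun l => G l j) i))
      + Module.finrank Fq ((Submodule.span Fq (Set.range fun j : Fin n => fun i : Fin k => G i j))
          ⊓ Submodule.restrictScalars Fq (LinearMap.ker f) : Submodule Fq (Fin k → Fqm)) = n := by
  set X := Submodule.span Fq (Set.range fun j : Fin n => fun i : Fin k => G i j) with hX
  haveI : FiniteDimensional Fq X := FiniteDimensional.span_of_finite Fq (Set.finite_range _)
  have hXn : Module.finrank Fq X = n := by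
    rw [hX, finrank_span_eq_card hnd, Fintype.card_fin]
  set fq := f.restrictScalars Fq with hfq
  have hmap : Submodule.span Fq (Set.range fun j : Fin n => fun i : Fin r => f (fun l => G l j) i)
      = X.map fq := by
    rw [hX, Submodule.map_span, ← Set.range_comp]
    rfl
  have hker : LinearMap.ker fq = Submodule.restrictScalars Fq (LinearMap.ker f) := rfl
  have h := aux_rn fq X
  rw [hker, hXn] at h
  rw [hmap]
  exact h

private lemma aux_fwd {Fqm : Type*} [Field Fqm]
    {n k r : ℕ} (C : Submodule Fqm (Fin n → Fqm))
    (G : Fin k → Fin n → Fqm)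
    (hGspan : Submodule.span Fqm (Set.range G) = C)
    (b : Fin r → Fin n → Fqm) (hb : LinearIndependent Fqm b)
    (hbC : Submodule.span Fqm (Set.range b) ≤ C) :
    ∃ f : (Fin k → Fqm) →ₗ[Fqm] (Fin r → Fqm), Function.Surjective f ∧
      (∀ j i, f (fun l => G l j) i = b i j) := by
  have hmem : ∀ i, b i ∈ Submodule.span Fqm (Set.range G) := by
    intro i
    rw [hGspan]
    exact hbC (Submodule.subset_span (Set.mem_range_self i))
  choose A hA using fun i => (Submodule.mem_span_range_iff_exists_fun Fqm).mp (hmem i)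
  refine ⟨(Matrix.of A).mulVecLin, ?_, ?_⟩
  · apply aux_surj
    change LinearIndependent Fqm A
    rw [Fintype.linearIndependent_iff]
    intro c hc
    have hc' : ∀ l, ∑ i, c i * A i l = 0 := by
      intro l
      have := congrFun hc l
      simpa [Finset.sum_apply] using this
    have hb0 : ∑ i, c i • b i = 0 := by
      funext j
      have : ∀ i, b i j = ∑ l, A i l * G l j := by
        intro i
        rw [← hA i]
        simp [Finset.sum_apply]
      simp only [Finset.sum_apply, Pi.smul_apply, smul_eq_mul, this, Pi.zero_apply]
      simp only [Finset.mul_sum]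
      rw [Finset.sum_comm]
      calc ∑ l, ∑ i, c i * (A i l * G l j)
          = ∑ l : Fin k, (∑ i, c i * A i l) * G l j := by
            congr 1; funext l; rw [Finset.sum_mul]; congr 1; funext i; ring
        _ = 0 := by simp [hc']
    exact Fintype.linearIndependent_iff.mp hb c hb0
  · intro j i
    have := congrFun (hA i) j
    simp only [Finset.sum_apply, Pi.smul_apply, smul_eq_mul] at this
    simpa [Matrix.mulVecLin_apply, Matrix.mulVec, dotProduct] using this

private lemma aux_bwd {Fqm : Type*} [Field Fqm]
    {n k r : ℕ} (C : Submodule Fqm (Fin n → Fqm))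
    (G : Fin k → Fin n → Fqm) (hGind : LinearIndependent Fqm G)
    (hGspan : Submodule.span Fqm (Set.range G) = C)
    (hrk : r ≤ k)
    (W : Submodule Fqm (Fin k → Fqm)) (hW : Module.finrank Fqm W = k - r) :
    ∃ f : (Fin k → Fqm) →ₗ[Fqm] (Fin r → Fqm), LinearMap.ker f = W ∧
      LinearIndependent Fqm (fun i : Fin r => fun j : Fin n => f (fun l => G l j) i) ∧
      Submodule.span Fqm
        (Set.range (fun i : Fin r => fun j : Fin n => f (fun l => G l j) i)) ≤ C := by
  have hQ : Module.finrank Fqm ((Fin k → Fqm) ⧸ W) = r := by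
    have h1 := Submodule.finrank_quotient_add_finrank W
    have h2 : Module.finrank Fqm (Fin k → Fqm) = k := by simp
    omega
  obtain ⟨e⟩ := FiniteDimensional.nonempty_linearEquiv_of_finrank_eq
    (show Module.finrank Fqm ((Fin k → Fqm) ⧸ W) = Module.finrank Fqm (Fin r → Fqm) by
      rw [hQ]; simp)
  set f := e.toLinearMap ∘ₗ W.mkQ with hf
  have hker : LinearMap.ker f = W := by
    rw [hf, LinearMap.ker_comp, LinearEquiv.ker, Submodule.comap_bot, Submodule.ker_mkQ]
  have hsurj : Function.Surjective f := e.surjective.comp (Submodule.mkQ_surjective W)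
  set b := fun i : Fin r => fun j : Fin n => f (fun l => G l j) i with hb
  refine ⟨f, hker, ?_, ?_⟩
  · have hcols : Submodule.span Fqm (Set.range fun j : Fin n => fun i : Fin k => G i j) = ⊤ := by
      have h1 := Matrix.range_mulVecLin (Matrix.of G)
      rw [LinearMap.range_eq_top.mpr (aux_surj (Matrix.of G) hGind)] at h1
      exact h1.symm
    rw [Fintype.linearIndependent_iff]
    intro c hc
    set g : (Fin r → Fqm) →ₗ[Fqm] Fqm := ∑ i, c i • LinearMap.proj i with hg
    have hgf : ∀ v : Fin k → Fqm, g (f v) = 0 := by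
      have hle : Submodule.span Fqm (Set.range fun j : Fin n => fun i : Fin k => G i j)
          ≤ LinearMap.ker (g ∘ₗ f) := by
        rw [Submodule.span_le]
        rintro v ⟨j, rfl⟩
        have : g (f (fun i => G i j)) = ∑ i, c i * b i j := by
          simp [hg, LinearMap.sum_apply, b]
        simp only [SetLike.mem_coe, LinearMap.mem_ker, LinearMap.comp_apply]
        rw [this]
        calc ∑ i, c i * b i j = (∑ i, c i • b i) j := by simp [Finset.sum_apply]
          _ = 0 := by rw [hc]; rfl
      intro v
      have hv : v ∈ Submodule.span Fqm (Set.range fun j : Fin n => fun i : Fin k => G i j) := by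
        rw [hcols]; trivial
      simpa using hle hv
    intro i
    have h1 : g (f (Classical.choose (hsurj (Pi.single i 1)))) = g (Pi.single i 1) := by
      rw [Classical.choose_spec (hsurj (Pi.single i 1))]
    have h2 : g (Pi.single i 1) = c i := by
      simp [hg, LinearMap.sum_apply, Pi.single_apply]
    rw [hgf _] at h1
    rw [← h2, ← h1]
  · rw [Submodule.span_le]
    rintro v ⟨i, rfl⟩
    rw [← hGspan]
    have hbi : b i = ∑ l, (f (fun j' => if l = j' then (1:Fqm) else 0) i) • G l := by
      funext j
      have h1 : (fun l => G l j) = ∑ l, G l j • fun j' => if l = j' then (1:Fqm) else 0 :=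
        pi_eq_sum_univ _
      calc b i j = f (fun l => G l j) i := rfl
        _ = ∑ l, G l j * f (fun j' => if l = j' then (1:Fqm) else 0) i := by
            rw [h1, map_sum]
            simp [Finset.sum_apply]
        _ = (∑ l, (f (fun j' => if l = j' then (1:Fqm) else 0) i) • G l) j := by
            simp [Finset.sum_apply, mul_comm]
    show b i ∈ _
    rw [hbi]
    exact Submodule.sum_mem _ fun l _ =>
      Submodule.smul_mem _ _ (Submodule.subset_span (Set.mem_range_self l))

/-- The `r`-th generalized rank weight of a linear rank metric code `C ⊆ (F_{q^m})^n`: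
the minimum `F_q`-dimension of the q-support (the `F_q`-span of the columns of a generator
matrix) over all `r`-dimensional `F_{q^m}`-subcodes `D` of `C`. -/
noncomputable def genRankWeight (Fq : Type*) {Fqm : Type*} [Field Fq] [Field Fqm]
    [Algebra Fq Fqm] {n : ℕ} (C : Submodule Fqm (Fin n → Fqm)) (r : ℕ) : ℕ :=
  sInf { w | ∃ b : Fin r → Fin n → Fqm, LinearIndependent Fqm b ∧
    Submodule.span Fqm (Set.range b) ≤ C ∧
    w = Module.finrank Fq
      (Submodule.span Fq (Set.range fun j : Fin n => fun i : Fin r => b i j)) }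

/-- For a non-degenerate `[n,k]` linear rank metric code `C` with generator
matrix `G` and associated q-system `X` (the `F_q`-span of the columns of `G`), the geometric
definition `n − d_r(X) = max{dim_{F_q}(X ∩ Π) : Π of codimension r}` agrees with
`d_r(C) = min{dim_{F_q} S_q(D) : D ≤ C, dim D = r}`. -/
theorem genRankWeight_eq_qSystem_weight
    {Fq Fqm : Type*} [Field Fq] [Field Fqm] [Algebra Fq Fqm]
    {n k : ℕ} (C : Submodule Fqm (Fin n → Fqm)) (hCk : Module.finrank Fqm C = k)
    (G : Fin k → Fin n → Fqm) (hGind : LinearIndependent Fqm G)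
    (hGspan : Submodule.span Fqm (Set.range G) = C)
    (hnd : LinearIndependent Fq (fun j : Fin n => fun i : Fin k => G i j))
    (X : Submodule Fq (Fin k → Fqm))
    (hXG : X = Submodule.span Fq (Set.range fun j : Fin n => fun i : Fin k => G i j))
    (r : ℕ) (hr1 : 1 ≤ r) (hrk : r ≤ k) :
    genRankWeight Fq C r ≤ n ∧
    n - genRankWeight Fq C r =
      sSup { w | ∃ W : Submodule Fqm (Fin k → Fqm), Module.finrank Fqm W = k - r ∧
        w = Module.finrank Fq (X ⊓ Submodule.restrictScalars Fq W : Submodule Fq (Fin k → Fqm)) } := by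
  subst hXG
  set Sset := { w | ∃ W : Submodule Fqm (Fin k → Fqm), Module.finrank Fqm W = k - r ∧
      w = Module.finrank Fq
        ((Submodule.span Fq (Set.range fun j : Fin n => fun i : Fin k => G i j))
          ⊓ Submodule.restrictScalars Fq W : Submodule Fq (Fin k → Fqm)) } with hSset
  set Wset := { w | ∃ b : Fin r → Fin n → Fqm, LinearIndependent Fqm b ∧
      Submodule.span Fqm (Set.range b) ≤ C ∧
      w = Module.finrank Fq
        (Submodule.span Fq (Set.range fun j : Fin n => fun i : Fin r => b i j)) } with hWset
  have hgen : genRankWeight Fq C r = sInf Wset := rfl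
  -- ker dimension of a surjective map is k - r
  have hkdim : ∀ f : (Fin k → Fqm) →ₗ[Fqm] (Fin r → Fqm), Function.Surjective f →
      Module.finrank Fqm (LinearMap.ker f) = k - r := by
    intro f hfsurj
    have h1 := LinearMap.finrank_range_add_finrank_ker f
    rw [LinearMap.range_eq_top.mpr hfsurj, finrank_top] at h1
    have h2 : Module.finrank Fqm (Fin r → Fqm) = r := by simp
    have h3 : Module.finrank Fqm (Fin k → Fqm) = k := by simp
    omega
  -- forward: every weight w has a matching s with w + s = n
  have hWS : ∀ w ∈ Wset, ∃ s ∈ Sset, w + s = n := by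
    rintro w ⟨b, hb, hbC, rfl⟩
    obtain ⟨f, hfsurj, hfb⟩ := aux_fwd C G hGspan b hb hbC
    have hcols : (fun j : Fin n => fun i : Fin r => f (fun l => G l j) i)
        = fun j : Fin n => fun i : Fin r => b i j := by
      funext j i; exact hfb j i
    have haw := aux_weight G hnd f
    rw [hcols] at haw
    exact ⟨_, ⟨LinearMap.ker f, hkdim f hfsurj, rfl⟩, haw⟩
  -- backward: every s has a matching weight w with w + s = n
  have hSW : ∀ s ∈ Sset, ∃ w ∈ Wset, w + s = n := by
    rintro s ⟨W, hW, rfl⟩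
    obtain ⟨f, hker, hind, hle⟩ := aux_bwd C G hGind hGspan hrk W hW
    have haw := aux_weight G hnd f
    rw [hker] at haw
    exact ⟨_, ⟨_, hind, hle, rfl⟩, haw⟩
  -- Sset is nonempty
  have hSne : Sset.Nonempty := by
    set f₀ : (Fin k → Fqm) →ₗ[Fqm] (Fin r → Fqm) :=
      LinearMap.funLeft Fqm Fqm (Fin.castLE hrk) with hf₀
    have hsurj₀ : Function.Surjective f₀ :=
      LinearMap.funLeft_surjective_of_injective Fqm Fqm _ (Fin.castLE_injective hrk)
    exact ⟨_, ⟨LinearMap.ker f₀, hkdim f₀ hsurj₀, rfl⟩⟩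
  have hSbdd : ∀ s ∈ Sset, s ≤ n := by
    intro s hs
    obtain ⟨w, _, hws⟩ := hSW s hs
    omega
  have hsup : sSup Sset ∈ Sset := Nat.sSup_mem hSne ⟨n, hSbdd⟩
  obtain ⟨w0, hw0mem, hw0⟩ := hSW _ hsup
  have hWne : Wset.Nonempty := ⟨w0, hw0mem⟩
  have hinf : sInf Wset ∈ Wset := Nat.sInf_mem hWne
  obtain ⟨s0, hs0mem, hs0⟩ := hWS _ hinf
  have h1 : sInf Wset ≤ w0 := Nat.sInf_le hw0mem
  have h2 : s0 ≤ sSup Sset := le_csSup ⟨n, fun s hs => hSbdd s hs⟩ hs0mem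
  rw [hgen]
  omega
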